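/- Let K be one of the quadratic fields ℚ(i), ℚ(√2), ℚ(√−2), or ℚ(√p*) where p is an odd prime and p* = (−1)^{(p−1)/2} p. If a rational prime l is the norm of an ideal of K (equivalently, l splits or ramifies with residue degree 1), then l is the norm of an element of K. -/
import Mathlib

set_option maxHeartbeats 1000000
set_option synthInstance.maxHeartbeats 400000

open NumberField Polynomial

lemma aux_sq (p : ℕ) (hp : p.Prime) (x y : ℤ) (h : x^2 = p * y^2) : x = 0 ∧ y = 0 := by
  rcases eq_or_ne y 0 with hy | hy
  · subst hy; simp at h; exact ⟨by simpa using h, rfl⟩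
  · exfalso
    set a := x.natAbs
    set b := y.natAbs
    have hb : b ≠ 0 := Int.natAbs_ne_zero.mpr hy
    have hnat : a^2 = p * b^2 := by
      have := congrArg Int.natAbs h
      simpa [a, b, Int.natAbs_mul, Int.natAbs_pow] using this
    have ha : a ≠ 0 := by
      intro h0
      rw [h0] at hnat
      simp at hnat
      rcases hnat with h1 | h1
      · exact hp.ne_zero h1
      · exact hb h1
    have h1 : (a^2).factorization p = (p * b^2).factorization p := by rw [hnat]
    rw [Nat.factorization_pow, Nat.factorization_mul hp.ne_zero (pow_ne_zero _ hb),
      Nat.factorization_pow] at h1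
    simp only [Finsupp.smul_apply, Finsupp.add_apply, hp.factorization_self, smul_eq_mul] at h1
    omega

lemma prime_not_sq (p : ℕ) (hp : p.Prime) (k : ℤ) : k^2 ≠ (p:ℤ) := by
  intro h
  have := aux_sq p hp k 1 (by linarith)
  rw [this.1] at h
  simp at h
  exact hp.ne_zero (by exact_mod_cast h.symm)

lemma mul_primes_not_sq (p l : ℕ) (hp : p.Prime) (hl : l.Prime) (hne : p ≠ l) (k : ℕ) :
    k^2 ≠ p * l := by
  intro h
  have hpk : p ∣ k := hp.dvd_of_dvd_pow (h ▸ Dvd.intro l rfl)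
  obtain ⟨m, rfl⟩ := hpk
  have hpm : p * (p * m^2) = p * l := by ring_nf; ring_nf at h; linarith [h]
  have : p * m^2 = l := Nat.eq_of_mul_eq_mul_left hp.pos hpm
  have hpl : p ∣ l := ⟨m^2, this.symm⟩
  exact hne ((Nat.prime_dvd_prime_iff_eq hp hl).mp hpl)

lemma box_lemma (M N : ℕ) (hM : 0 < M) (hN : 0 < N) (r s : ℤ) (A B C : ℕ)
    (h : M * N < (A+1)*(B+1)*(C+1)) :
    ∃ x y z : ℤ, ¬(x = 0 ∧ y = 0 ∧ z = 0) ∧ x^2 ≤ (A:ℤ)^2 ∧ y^2 ≤ (B:ℤ)^2 ∧ z^2 ≤ (C:ℤ)^2 ∧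
      (M:ℤ) ∣ (x - r*y) ∧ (N:ℤ) ∣ (x - s*z) := by
  haveI : NeZero M := ⟨hM.ne'⟩
  haveI : NeZero N := ⟨hN.ne'⟩
  set S : Finset (ℤ × ℤ × ℤ) :=
    (Finset.Icc 0 (A:ℤ)) ×ˢ ((Finset.Icc 0 (B:ℤ)) ×ˢ (Finset.Icc 0 (C:ℤ))) with hS
  have hcard : S.card = (A+1)*(B+1)*(C+1) := by
    simp [hS, Finset.card_product, Int.card_Icc]
    ring
  have hmaps : ∀ a ∈ S, (fun t : ℤ × ℤ × ℤ =>
      (((t.1 - r * t.2.1 : ℤ) : ZMod M), ((t.1 - s * t.2.2 : ℤ) : ZMod N))) a ∈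
      (Finset.univ : Finset (ZMod M × ZMod N)) := by
    intro a _; exact Finset.mem_univ _
  have hlt : (Finset.univ : Finset (ZMod M × ZMod N)).card < S.card := by
    rw [hcard, Finset.card_univ, Fintype.card_prod, ZMod.card, ZMod.card]
    exact h
  obtain ⟨a, ha, b, hb, hab, hfab⟩ := Finset.exists_ne_map_eq_of_card_lt_of_maps_to hlt hmaps
  refine ⟨a.1 - b.1, a.2.1 - b.2.1, a.2.2 - b.2.2, ?_, ?_, ?_, ?_, ?_, ?_⟩
  · rintro ⟨h1, h2, h3⟩
    apply hab
    have := sub_eq_zero.mp h1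
    have := sub_eq_zero.mp h2
    have := sub_eq_zero.mp h3
    exact Prod.ext ‹a.1 = b.1› (Prod.ext ‹a.2.1 = b.2.1› ‹a.2.2 = b.2.2›)
  · simp only [hS, Finset.mem_product, Finset.mem_Icc] at ha hb
    nlinarith [ha.1.1, ha.1.2, hb.1.1, hb.1.2]
  · simp only [hS, Finset.mem_product, Finset.mem_Icc] at ha hb
    nlinarith [ha.2.1.1, ha.2.1.2, hb.2.1.1, hb.2.1.2]
  · simp only [hS, Finset.mem_product, Finset.mem_Icc] at ha hb
    nlinarith [ha.2.2.1, ha.2.2.2, hb.2.2.1, hb.2.2.2]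
  · have h1 := congrArg Prod.fst hfab
    simp only at h1
    rw [← sub_eq_zero] at h1
    have : (((a.1 - b.1) - r * (a.2.1 - b.2.1) : ℤ) : ZMod M) = 0 := by
      push_cast
      push_cast at h1
      ring_nf
      ring_nf at h1
      linear_combination h1
    exact (ZMod.intCast_zmod_eq_zero_iff_dvd _ _).mp this
  · have h1 := congrArg Prod.snd hfab
    simp only at h1
    rw [← sub_eq_zero] at h1
    have : (((a.1 - b.1) - s * (a.2.2 - b.2.2) : ℤ) : ZMod N) = 0 := by
      push_cast
      push_cast at h1
      ring_nf
      ring_nf at h1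
      linear_combination h1
    exact (ZMod.intCast_zmod_eq_zero_iff_dvd _ _).mp this

lemma sq_lift (n : ℕ) [NeZero n] (d : ℤ) (h : IsSquare ((d : ZMod n))) :
    ∃ r : ℤ, (n:ℤ) ∣ r^2 - d := by
  obtain ⟨t, ht⟩ := h
  refine ⟨(t.val : ℤ), ?_⟩
  have : (((t.val : ℤ)^2 - d : ℤ) : ZMod n) = 0 := by
    push_cast
    rw [ZMod.natCast_val, ZMod.cast_id, ht]
    ring
  exact (ZMod.intCast_zmod_eq_zero_iff_dvd _ _).mp this

lemma sqrt_sq_lt (n : ℕ) (h : ∀ k : ℕ, k^2 ≠ n) : ((Nat.sqrt n : ℤ))^2 < (n:ℤ) := by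
  have h1 : Nat.sqrt n * Nat.sqrt n ≤ n := Nat.sqrt_le n
  have h2 : Nat.sqrt n * Nat.sqrt n ≠ n := by
    intro hc; exact h (Nat.sqrt n) (by rw [pow_two]; exact hc)
  have h3 : Nat.sqrt n * Nat.sqrt n < n := lt_of_le_of_ne h1 h2
  have := (Int.ofNat_lt).mpr h3
  push_cast at this ⊢
  nlinarith [this]

lemma rep_p (p l : ℕ) (hp : p.Prime) (hl : l.Prime) (hne : l ≠ p) (d : ℤ)
    (hd : d = (p:ℤ) ∨ d = -(p:ℤ))
    (hr : IsSquare ((d : ZMod l)))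
    (hs : IsSquare (((l:ℤ) : ZMod p))) :
    ∃ x y z w : ℤ, z^2 - d*w^2 ≠ 0 ∧ x^2 - d*y^2 = l * (z^2 - d*w^2) := by
  haveI : NeZero l := ⟨hl.ne_zero⟩
  haveI : NeZero p := ⟨hp.ne_zero⟩
  obtain ⟨r, hrd⟩ := sq_lift l d hr
  obtain ⟨s, hsl⟩ := sq_lift p (l:ℤ) hs
  set A := Nat.sqrt (p*l) with hA
  set B := Nat.sqrt l with hB
  set C := Nat.sqrt p with hC
  have hA2 : (A:ℤ)^2 < (p:ℤ)*l := by
    have := sqrt_sq_lt (p*l) (fun k => mul_primes_not_sq p l hp hl (fun he => hne he.symm) k)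
    push_cast at this
    exact this
  have hB2 : (B:ℤ)^2 < (l:ℤ) := by
    refine sqrt_sq_lt l (fun k hk => prime_not_sq l hl k ?_)
    exact_mod_cast congrArg (Nat.cast : ℕ → ℤ) hk
  have hC2 : (C:ℤ)^2 < (p:ℤ) := by
    refine sqrt_sq_lt p (fun k hk => prime_not_sq p hp k ?_)
    exact_mod_cast congrArg (Nat.cast : ℕ → ℤ) hk
  have hbox : l * p < (A+1)*(B+1)*(C+1) := by
    have a1 : p*l < (A+1)*(A+1) := Nat.lt_succ_sqrt (p*l)
    have b1 : l < (B+1)*(B+1) := Nat.lt_succ_sqrt l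
    have c1 : p < (C+1)*(C+1) := Nat.lt_succ_sqrt p
    by_contra hcon
    push_neg at hcon
    have h3 : (p*l)*l < ((A+1)*(A+1))*((B+1)*(B+1)) :=
      Nat.mul_lt_mul_of_lt_of_le a1 b1.le (by positivity)
    have h4 : ((p*l)*l)*p < (((A+1)*(A+1))*((B+1)*(B+1)))*((C+1)*(C+1)) :=
      Nat.mul_lt_mul_of_lt_of_le h3 c1.le (by positivity)
    have h5 : ((A+1)*(B+1)*(C+1))^2 ≤ (l*p)^2 := Nat.pow_le_pow_left hcon 2
    have h6 : ((A+1)*(B+1)*(C+1))^2 = (((A+1)*(A+1))*((B+1)*(B+1)))*((C+1)*(C+1)) := by ring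
    have h7 : (l*p)^2 = ((p*l)*l)*p := by ring
    rw [h6, h7] at h5
    exact absurd h5 (not_le.mpr h4)
  obtain ⟨x, y, z, hnz, hx, hy, hz, hdl, hdp⟩ := box_lemma l p hl.pos hp.pos r s A B C hbox
  have hlF : (l:ℤ) ∣ x^2 - d*y^2 - l*z^2 := by
    obtain ⟨u, hu⟩ := hdl
    obtain ⟨v, hv⟩ := hrd
    exact ⟨u*(x + r*y) + v*y^2 - z^2, by linear_combination (x + r*y)*hu + y^2*hv⟩
  have hpF : (p:ℤ) ∣ x^2 - d*y^2 - l*z^2 := by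
    obtain ⟨u, hu⟩ := hdp
    obtain ⟨v, hv⟩ := hsl
    have hpd : (p:ℤ) ∣ d := by rcases hd with h|h <;> simp [h]
    obtain ⟨e, he⟩ := hpd
    exact ⟨u*(x + s*z) + v*z^2 - e*y^2, by linear_combination (x + s*z)*hu + z^2*hv - y^2*he⟩
  have hcop : IsCoprime (l:ℤ) (p:ℤ) :=
    Nat.isCoprime_iff_coprime.mpr ((Nat.coprime_primes hl hp).mpr hne)
  obtain ⟨k, hk⟩ := hcop.mul_dvd hlF hpF
  have hlp0 : (0:ℤ) < (l:ℤ)*(p:ℤ) :=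
    mul_pos (by exact_mod_cast hl.pos) (by exact_mod_cast hp.pos)
  have hx2 : x^2 < (p:ℤ)*l := lt_of_le_of_lt hx hA2
  have hy2 : y^2 < (l:ℤ) := lt_of_le_of_lt hy hB2
  have hz2 : z^2 < (p:ℤ) := lt_of_le_of_lt hz hC2
  have hl0 : (0:ℤ) < l := by exact_mod_cast hl.pos
  have hp0 : (0:ℤ) < p := by exact_mod_cast hp.pos
  have hpy2 : (p:ℤ)*y^2 < (p:ℤ)*l := by
    exact mul_lt_mul_of_pos_left hy2 hp0
  have hlz2 : (l:ℤ)*z^2 < (l:ℤ)*p := by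
    exact mul_lt_mul_of_pos_left hz2 hl0
  have hpy0 : (0:ℤ) ≤ (p:ℤ)*y^2 := mul_nonneg hp0.le (sq_nonneg y)
  have hlz0 : (0:ℤ) ≤ (l:ℤ)*z^2 := mul_nonneg hl0.le (sq_nonneg z)
  rcases hd with hdp' | hdp'
  · subst hdp'
    -- F = x² - p y² - l z² ∈ (-2pl, pl), so k ∈ {-1, 0}
    have hk1 : k < 1 := by
      by_contra hc
      push_neg at hc
      have h9 : (l:ℤ)*p*1 ≤ l*p*k := mul_le_mul_of_nonneg_left hc hlp0.le
      linarith [hk, hx2, hpy0, hlz0, h9]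
    have hk2 : (-2:ℤ) < k := by
      by_contra hc
      push_neg at hc
      have h9 : (l:ℤ)*p*k ≤ l*p*(-2) := mul_le_mul_of_nonneg_left hc hlp0.le
      linarith [hk, hpy2, hlz2, sq_nonneg x, h9]
    have hk01 : k = 0 ∨ k = -1 := by omega
    rcases hk01 with hk0 | hkm
    · subst hk0
      have hzne : z ≠ 0 := by
        intro hz0
        subst hz0
        have h0 : x^2 = (p:ℤ) * y^2 := by linarith [hk]
        have := aux_sq p hp x y h0
        exact hnz ⟨this.1, this.2, rfl⟩
      exact ⟨x, y, z, 0, by simpa using pow_ne_zero 2 hzne, by linarith [hk]⟩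
    · subst hkm
      refine ⟨x, y, z, 1, ?_, by linarith [hk]⟩
      intro hc
      exact prime_not_sq p hp z (by linarith [hc])
  · subst hdp'
    -- F = x² + p y² - l z² ∈ (-pl, 2pl), so k ∈ {0, 1}
    have hk1 : k < 2 := by
      by_contra hc
      push_neg at hc
      have h9 : (l:ℤ)*p*2 ≤ l*p*k := mul_le_mul_of_nonneg_left hc hlp0.le
      linarith [hk, hx2, hpy2, hlz0, h9]
    have hk2 : (-1:ℤ) < k := by
      by_contra hc
      push_neg at hc
      have h9 : (l:ℤ)*p*k ≤ l*p*(-1) := mul_le_mul_of_nonneg_left hc hlp0.le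
      linarith [hk, hlz2, sq_nonneg x, hpy0, h9]
    have hk01 : k = 0 ∨ k = 1 := by omega
    rcases hk01 with hk0 | hk1'
    · subst hk0
      have hzne : z ≠ 0 := by
        intro hz0
        subst hz0
        have h0 : x^2 + (p:ℤ)*y^2 = 0 := by linarith [hk]
        have hxx : x^2 = 0 := le_antisymm (by linarith [hpy0]) (sq_nonneg x)
        have hyy : (p:ℤ)*y^2 = 0 := by linarith [sq_nonneg x]
        have hx' : x = 0 := by
          exact pow_eq_zero_iff two_ne_zero |>.mp hxx
        have hy' : y = 0 := by
          rcases mul_eq_zero.mp hyy with h|h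
          · exact absurd h (by positivity)
          · exact pow_eq_zero_iff two_ne_zero |>.mp h
        exact hnz ⟨hx', hy', rfl⟩
      exact ⟨x, y, z, 0, by simpa using pow_ne_zero 2 hzne, by linarith [hk]⟩
    · subst hk1'
      refine ⟨x, y, z, 1, ?_, by linarith [hk]⟩
      intro hc
      linarith [sq_nonneg z, hp0, hc]

lemma rep_small (l : ℕ) (hl : l.Prime) (hodd : l ≠ 2) (d : ℤ)
    (hd : d = -1 ∨ d = 2 ∨ d = -2)
    (hr : IsSquare ((d : ZMod l))) :
    ∃ x y z w : ℤ, z^2 - d*w^2 ≠ 0 ∧ x^2 - d*y^2 = l * (z^2 - d*w^2) := by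
  haveI : NeZero l := ⟨hl.ne_zero⟩
  obtain ⟨r, hrd⟩ := sq_lift l d hr
  set B := Nat.sqrt l with hB
  set A := Nat.sqrt (2*l) with hA
  have hl0 : (0:ℤ) < l := by exact_mod_cast hl.pos
  have hB2 : (B:ℤ)^2 < (l:ℤ) := by
    refine sqrt_sq_lt l (fun k hk => prime_not_sq l hl k ?_)
    exact_mod_cast congrArg (Nat.cast : ℕ → ℤ) hk
  have hA2 : (A:ℤ)^2 < 2*(l:ℤ) := by
    have := sqrt_sq_lt (2*l) (fun k => mul_primes_not_sq 2 l Nat.prime_two hl (fun he => hodd he.symm) k)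
    push_cast at this
    exact this
  have hbox : l * 1 < (A+1)*(B+1)*(0+1) := by
    have a1 : 2*l < (A+1)*(A+1) := Nat.lt_succ_sqrt (2*l)
    have b1 : l < (B+1)*(B+1) := Nat.lt_succ_sqrt l
    by_contra hcon
    push_neg at hcon
    have h3 : (2*l)*l < ((A+1)*(A+1))*((B+1)*(B+1)) :=
      Nat.mul_lt_mul_of_lt_of_le a1 b1.le (by positivity)
    have h5 : ((A+1)*(B+1)*(0+1))^2 ≤ (l*1)^2 := Nat.pow_le_pow_left hcon 2
    have h6 : ((A+1)*(B+1)*(0+1))^2 = ((A+1)*(A+1))*((B+1)*(B+1)) := by ring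
    have h7 : (l*1)^2 = l*l := by ring
    rw [h6, h7] at h5
    have : (2*l)*l ≤ l*l := le_trans h3.le h5
    nlinarith [hl.pos, h3, h5]
  obtain ⟨x, y, z, hnz, hx, hy, hz, hdl, -⟩ := box_lemma l 1 hl.pos one_pos r 0 A B 0 hbox
  have hz0 : z = 0 := by
    have : z^2 ≤ 0 := by simpa using hz
    nlinarith [sq_nonneg z, this]
  subst hz0
  have hlF : (l:ℤ) ∣ x^2 - d*y^2 := by
    obtain ⟨u, hu⟩ := hdl
    obtain ⟨v, hv⟩ := hrd
    exact ⟨u*(x + r*y) + v*y^2, by linear_combination (x + r*y)*hu + y^2*hv⟩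
  obtain ⟨k, hk⟩ := hlF
  have hx2 : x^2 < 2*(l:ℤ) := lt_of_le_of_lt hx hA2
  have hy2 : y^2 < (l:ℤ) := lt_of_le_of_lt hy hB2
  have hxyne : ¬(x = 0 ∧ y = 0) := fun ⟨h1, h2⟩ => hnz ⟨h1, h2, rfl⟩
  rcases hd with hd' | hd' | hd'
  · -- d = -1 : F = x²+y² ∈ (0, 3l), k ∈ {1, 2}
    subst hd'
    have hFpos : 0 < x^2 + y^2 := by
      by_contra hcon
      push_neg at hcon
      have h1 : x^2 = 0 := le_antisymm (by linarith [sq_nonneg y]) (sq_nonneg x)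
      have h2 : y^2 = 0 := le_antisymm (by linarith [sq_nonneg x]) (sq_nonneg y)
      exact hxyne ⟨pow_eq_zero_iff two_ne_zero |>.mp h1, pow_eq_zero_iff two_ne_zero |>.mp h2⟩
    have hk1 : k = 1 ∨ k = 2 := by
      have e1 : x^2 + y^2 = l*k := by linarith [hk]
      have c1 : (l:ℤ)*k < l*3 := by linarith [hx2, hy2, e1]
      have c2 : (l:ℤ)*0 < l*k := by linarith [hFpos, e1]
      have := lt_of_mul_lt_mul_left c1 hl0.le
      have := lt_of_mul_lt_mul_left c2 hl0.le
      omega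
    rcases hk1 with h|h
    · exact ⟨x, y, 1, 0, by norm_num, by subst h; linarith [hk]⟩
    · -- x²+y² = 2l : use (z,w) = (1,1): 1-(-1) = 2
      exact ⟨x, y, 1, 1, by norm_num, by subst h; linarith [hk]⟩
  · -- d = 2 : F = x²-2y² ∈ (-2l, 2l), k ∈ {-1, 0, 1}
    subst hd'
    have hk1 : k = -1 ∨ k = 0 ∨ k = 1 := by
      have c1 : (l:ℤ)*k < l*2 := by linarith [hx2, sq_nonneg y, hk]
      have c2 : (l:ℤ)*(-2) < l*k := by linarith [hy2, sq_nonneg x, hk]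
      have := lt_of_mul_lt_mul_left c1 hl0.le
      have := lt_of_mul_lt_mul_left c2 hl0.le
      omega
    rcases hk1 with h|h|h
    · -- x²-2y² = -l = l*(1-2)
      exact ⟨x, y, 1, 1, by norm_num, by subst h; linarith [hk]⟩
    · exfalso
      subst h
      have h0 : x^2 = 2*y^2 := by linarith [hk]
      have := aux_sq 2 Nat.prime_two x y (by exact_mod_cast h0)
      exact hxyne ⟨this.1, this.2⟩
    · exact ⟨x, y, 1, 0, by norm_num, by subst h; linarith [hk]⟩
  · -- d = -2 : F = x²+2y² ∈ (0, 4l), k ∈ {1, 2, 3}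
    subst hd'
    have hFpos : 0 < x^2 + 2*y^2 := by
      by_contra hcon
      push_neg at hcon
      have h1 : x^2 = 0 := le_antisymm (by linarith [sq_nonneg y]) (sq_nonneg x)
      have h2 : y^2 = 0 := le_antisymm (by linarith [sq_nonneg x]) (sq_nonneg y)
      exact hxyne ⟨pow_eq_zero_iff two_ne_zero |>.mp h1, pow_eq_zero_iff two_ne_zero |>.mp h2⟩
    have hk1 : k = 1 ∨ k = 2 ∨ k = 3 := by
      have c1 : (l:ℤ)*k < l*4 := by linarith [hx2, hy2, hk]
      have c2 : (l:ℤ)*0 < l*k := by linarith [hFpos, hk]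
      have := lt_of_mul_lt_mul_left c1 hl0.le
      have := lt_of_mul_lt_mul_left c2 hl0.le
      omega
    rcases hk1 with h|h|h
    · exact ⟨x, y, 1, 0, by norm_num, by subst h; linarith [hk]⟩
    · exact ⟨x, y, 0, 1, by norm_num, by subst h; linarith [hk]⟩
    · exact ⟨x, y, 1, 1, by norm_num, by subst h; linarith [hk]⟩

lemma norm_formula (K : Type*) [Field K] [NumberField K] (hdeg : Module.finrank ℚ K = 2)
    (d : ℤ) (hnsq : ∀ q : ℚ, q^2 ≠ (d:ℚ)) (α : K) (hα : α^2 = (d:K)) (x y : ℚ) :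
    Algebra.norm ℚ (algebraMap ℚ K x + algebraMap ℚ K y * α) = x^2 - d*y^2 := by
  have hdK : algebraMap ℚ K ((d:ℚ)) = (d:K) := by
    simp
  have hirr : ∀ a : ℚ, a • (1:K) ≠ α := by
    intro a ha
    apply hnsq a
    have : (algebraMap ℚ K (a^2)) = algebraMap ℚ K ((d:ℚ)) := by
      rw [map_pow, hdK, ← hα, ← ha, Algebra.smul_def, mul_one]
    have := (algebraMap ℚ K).injective this
    rw [this]
  have li : LinearIndependent ℚ ![α, (1:K)] := by
    rw [linearIndependent_fin2]
    refine ⟨by simp, ?_⟩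
    intro a ha
    exact hirr a (by simpa using ha)
  have hcard : Fintype.card (Fin 2) = Module.finrank ℚ K := by simp [hdeg]
  set b := basisOfLinearIndependentOfCardEqFinrank li hcard with hbdef
  have hb : ⇑b = ![α, (1:K)] := coe_basisOfLinearIndependentOfCardEqFinrank li hcard
  have hb0 : b 0 = α := by rw [hb]; rfl
  have hb1 : b 1 = (1:K) := by rw [hb]; rfl
  set β := algebraMap ℚ K x + algebraMap ℚ K y * α with hβ
  have key0 : β * b 0 = x • b 0 + (y*(d:ℚ)) • b 1 := by
    rw [hb0, hb1, Algebra.smul_def, Algebra.smul_def, mul_one, map_mul, hdK, ← hα, hβ]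
    ring
  have key1 : β * b 1 = y • b 0 + x • b 1 := by
    rw [hb0, hb1, Algebra.smul_def, Algebra.smul_def, mul_one, mul_one, hβ]
    ring
  have repr_comb : ∀ (c₀ c₁ : ℚ) (i : Fin 2), b.repr (c₀ • b 0 + c₁ • b 1) i = ![c₀, c₁] i := by
    intro c₀ c₁ i
    rw [map_add, map_smul, map_smul, Module.Basis.repr_self, Module.Basis.repr_self]
    fin_cases i <;> simp
  rw [Algebra.norm_eq_matrix_det b, Matrix.det_fin_two]
  have e00 : (Algebra.leftMulMatrix b) β 0 0 = x := by
    rw [Algebra.leftMulMatrix_apply, LinearMap.toMatrix_apply, show ((Algebra.lmul ℚ K) β) (b 0) = β * b 0 from rfl, key0]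
    simpa using repr_comb x (y*(d:ℚ)) 0
  have e10 : (Algebra.leftMulMatrix b) β 1 0 = y*(d:ℚ) := by
    rw [Algebra.leftMulMatrix_apply, LinearMap.toMatrix_apply, show ((Algebra.lmul ℚ K) β) (b 0) = β * b 0 from rfl, key0]
    simpa using repr_comb x (y*(d:ℚ)) 1
  have e01 : (Algebra.leftMulMatrix b) β 0 1 = y := by
    rw [Algebra.leftMulMatrix_apply, LinearMap.toMatrix_apply, show ((Algebra.lmul ℚ K) β) (b 1) = β * b 1 from rfl, key1]
    simpa using repr_comb y x 0
  have e11 : (Algebra.leftMulMatrix b) β 1 1 = x := by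
    rw [Algebra.leftMulMatrix_apply, LinearMap.toMatrix_apply, show ((Algebra.lmul ℚ K) β) (b 1) = β * b 1 from rfl, key1]
    simpa using repr_comb y x 1
  rw [e00, e11, e01, e10]
  ring

lemma quot_char_surj (K : Type*) [Field K] [NumberField K] (l : ℕ) (hl : l.Prime)
    (I : Ideal (RingOfIntegers K)) (hI : Ideal.absNorm I = l) :
    CharP (RingOfIntegers K ⧸ I) l ∧
      ∀ t : RingOfIntegers K ⧸ I, ∃ c : ℤ, (c : RingOfIntegers K ⧸ I) = t := by
  set R := RingOfIntegers K ⧸ I with hR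
  have hcard : Nat.card R = l := by
    rw [hR, ← hI, Ideal.absNorm_apply, Submodule.cardQuot_apply]
  haveI hfin : Finite R := Nat.finite_of_card_ne_zero (by rw [hcard]; exact hl.ne_zero)
  have hItop : I ≠ ⊤ := by
    intro htop
    rw [htop] at hI
    simp [Ideal.absNorm_top] at hI
    exact hl.ne_one hI.symm
  haveI : Nontrivial R := Ideal.Quotient.nontrivial_iff.mpr hItop
  have hl0 : ((l:ℕ) : R) = 0 := by
    have : ((l:ℕ) : RingOfIntegers K) ∈ I := by
      have := Ideal.absNorm_mem I
      rwa [hI] at this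
    have : (Ideal.Quotient.mk I) ((l:ℕ) : RingOfIntegers K) = 0 :=
      Ideal.Quotient.eq_zero_iff_mem.mpr this
    rwa [map_natCast] at this
  have hdvd : ringChar R ∣ l := (ringChar.spec R l).mp hl0
  have hchar : ringChar R = l := by
    rcases (Nat.Prime.eq_one_or_self_of_dvd hl _ hdvd) with h | h
    · exact absurd h (CharP.ringChar_ne_one)
    · exact h
  have hcharP : CharP R l := hchar ▸ ringChar.charP R
  refine ⟨hcharP, ?_⟩
  set H := AddSubgroup.zmultiples (1:R) with hH
  haveI : Finite H := Subtype.finite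
  have hdvd2 : Nat.card H ∣ Nat.card R := AddSubgroup.card_addSubgroup_dvd_card H
  have hne1 : Nat.card H ≠ 1 := by
    intro h1
    have : H = ⊥ := AddSubgroup.card_eq_one.mp h1
    have h1H : (1:R) ∈ H := AddSubgroup.mem_zmultiples _
    rw [this] at h1H
    simp at h1H
  have hHcard : Nat.card H = Nat.card R := by
    rw [hcard] at hdvd2 ⊢
    rcases (Nat.Prime.eq_one_or_self_of_dvd hl _ hdvd2) with h | h
    · exact absurd h hne1
    · exact h
  have htop : H = ⊤ := AddSubgroup.eq_top_of_card_eq H hHcard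
  intro t
  have : t ∈ H := htop ▸ AddSubgroup.mem_top t
  obtain ⟨n, hn⟩ := AddSubgroup.mem_zmultiples_iff.mp this
  exact ⟨n, by rw [← hn, zsmul_one]⟩

lemma recip_odd (p l : ℕ) (hp : p.Prime) (hl : l.Prime) (hp2 : p ≠ 2) (hl2 : l ≠ 2)
    (hne : l ≠ p) (d : ℤ)
    (hd : (d = p ∧ p % 4 = 1) ∨ (d = -p ∧ p % 4 = 3))
    (hsq : IsSquare ((d : ZMod l))) : IsSquare (((l:ℤ) : ZMod p)) := by
  haveI : Fact p.Prime := ⟨hp⟩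
  haveI : Fact l.Prime := ⟨hl⟩
  have hlodd : l % 2 = 1 := Nat.odd_iff.mp (hl.odd_of_ne_two hl2)
  have hlp : ¬ (l ∣ p) := fun hdvd => hne ((Nat.prime_dvd_prime_iff_eq hl hp).mp hdvd)
  have hpl : ¬ (p ∣ l) := fun hdvd => hne (((Nat.prime_dvd_prime_iff_eq hp hl).mp hdvd)).symm
  have hpne0 : ((p:ℤ) : ZMod l) ≠ 0 := by
    rw [Ne, ZMod.intCast_zmod_eq_zero_iff_dvd]
    exact_mod_cast hlp
  have hlne0 : ((l:ℤ) : ZMod p) ≠ 0 := by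
    rw [Ne, ZMod.intCast_zmod_eq_zero_iff_dvd]
    exact_mod_cast hpl
  have hQR := legendreSym.quadratic_reciprocity hl2 hp2 (fun h => hne h)
  rw [← (legendreSym.eq_one_iff p hlne0)]
  rcases hd with ⟨hdp, hmod⟩ | ⟨hdp, hmod⟩
  · subst hdp
    have h1 : legendreSym l (p:ℤ) = 1 := (legendreSym.eq_one_iff l hpne0).mpr hsq
    have heven : Even (l / 2 * (p / 2)) := by
      have : Even (p / 2) := by rw [Nat.even_iff]; omega
      exact this.mul_left _
    rw [h1, heven.neg_one_pow, mul_one] at hQR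
    exact hQR
  · subst hdp
    have h1 : legendreSym l ((-1) * (p:ℤ)) = 1 := by
      apply (legendreSym.eq_one_iff l ?_).mpr
      · convert hsq using 2
        push_cast
        ring
      · rw [Ne, ZMod.intCast_zmod_eq_zero_iff_dvd]
        intro hdvd
        have : (l:ℤ) ∣ (p:ℤ) := (dvd_neg).mp (by simpa using hdvd)
        exact hlp (by exact_mod_cast this)
    rw [legendreSym.mul, legendreSym.at_neg_one hl2] at h1
    have hχ : ZMod.χ₄ (l : ZMod 4) = (-1)^(l/2) := by
      have hl4 : l % 4 = 1 ∨ l % 4 = 3 := by omega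
      rcases hl4 with h | h
      · have he : Even (l/2) := by rw [Nat.even_iff]; omega
        rw [ZMod.χ₄_nat_eq_if_mod_four, he.neg_one_pow]
        simp [h, hlodd]
      · have ho : Odd (l/2) := by rw [Nat.odd_iff]; omega
        rw [ZMod.χ₄_nat_eq_if_mod_four, ho.neg_one_pow]
        simp [h, hlodd]
    rw [hχ] at h1
    have hppar : Odd (p/2) := by rw [Nat.odd_iff]; omega
    have hrhs : ((-1:ℤ)) ^ (l / 2 * (p / 2)) = (-1)^(l/2) := by
      rcases Nat.even_or_odd (l/2) with he | ho
      · rw [he.neg_one_pow, (he.mul_right _).neg_one_pow]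
      · rw [ho.neg_one_pow, (ho.mul hppar).neg_one_pow]
    rw [hrhs] at hQR
    have hsign : ((-1:ℤ))^(l/2) * ((-1:ℤ))^(l/2) = 1 := by
      rw [← mul_pow]; norm_num
    have ha : legendreSym l (p:ℤ) = (-1)^(l/2) := by
      have := congrArg (fun t => ((-1:ℤ))^(l/2) * t) h1
      simpa [← mul_assoc, hsign] using this
    rw [ha] at hQR
    have hs0 : ((-1:ℤ))^(l/2) ≠ 0 := pow_ne_zero _ (by norm_num)
    have : legendreSym p (l:ℤ) * (-1)^(l/2) = 1 * (-1)^(l/2) := by rw [hQR, one_mul]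
    exact mul_right_cancel₀ hs0 this

lemma recip_two (p : ℕ) (hp : p.Prime) (hp2 : p ≠ 2) (d : ℤ)
    (hd : d = p ∨ d = -p) (h8 : (8:ℤ) ∣ 1 - d) : IsSquare ((((2:ℕ):ℤ)) : ZMod p) := by
  haveI : Fact p.Prime := ⟨hp⟩
  have hp8 : p % 8 = 1 ∨ p % 8 = 7 := by
    have h2 := hp.two_le
    rcases hd with h | h <;> subst h <;> omega
  have := (ZMod.exists_sq_eq_two_iff hp2).mpr hp8
  convert this using 1
  push_cast
  norm_num

/-- Let `K` be one of the quadratic fields `ℚ(i)`, `ℚ(√2)`, `ℚ(√−2)`, or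
`ℚ(√p*)` where `p` is an odd prime and `p* = (−1)^{(p−1)/2}·p` (so `K = ℚ(√d)` with
`d ∈ {−1, 2, −2, p*}`).  If a rational prime `l` is the norm of an ideal of `K`, then `l` is
the norm of an element of `K`. -/
theorem stmt12 (K : Type*) [Field K] [NumberField K]
    (hdeg : Module.finrank ℚ K = 2) (d : ℤ)
    (hd : d = -1 ∨ d = 2 ∨ d = -2 ∨
      ∃ p : ℕ, p.Prime ∧ Odd p ∧ d = (-1) ^ ((p - 1) / 2) * (p : ℤ))
    (hK : ∃ α : K, α ^ 2 = (d : K))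
    (l : ℕ) (hl : l.Prime)
    (hideal : ∃ I : Ideal (NumberField.RingOfIntegers K), Ideal.absNorm I = l) :
    ∃ w : K, Algebra.norm ℚ w = (l : ℚ) := by
  obtain ⟨α, hα⟩ := hK
  obtain ⟨I, hI⟩ := hideal
  -- preprocess the shape of d
  have hd' : d = -1 ∨ d = 2 ∨ d = -2 ∨
      ∃ p : ℕ, p.Prime ∧ p ≠ 2 ∧ ((d = p ∧ p % 4 = 1) ∨ (d = -p ∧ p % 4 = 3)) := by
    rcases hd with h | h | h | ⟨p, hp, hpodd, hdd⟩
    · exact Or.inl h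
    · exact Or.inr (Or.inl h)
    · exact Or.inr (Or.inr (Or.inl h))
    · refine Or.inr (Or.inr (Or.inr ⟨p, hp, ?_, ?_⟩))
      · intro h2; rw [h2] at hpodd; exact (Nat.not_odd_iff_even.mpr (by decide)) hpodd
      · have hpm : p % 2 = 1 := Nat.odd_iff.mp hpodd
        rcases Nat.even_or_odd ((p-1)/2) with he | ho
        · left
          constructor
          · rw [hdd, he.neg_one_pow, one_mul]
          · rw [Nat.even_iff] at he; omega
        · right
          constructor
          · rw [hdd, ho.neg_one_pow]; ring
          · rw [Nat.odd_iff] at ho; omega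
  clear hd
  -- d is not a rational square
  have hnsq : ∀ q : ℚ, q^2 ≠ (d:ℚ) := by
    intro q hq
    have hden : (q.den : ℚ) ≠ 0 := by
      exact_mod_cast q.den_nz
    have hnum : (q.num : ℚ)^2 = (d:ℚ) * (q.den:ℚ)^2 := by
      have h2 : ((q.num:ℚ)/(q.den:ℚ))^2 = (d:ℚ) := by rw [Rat.num_div_den q]; exact hq
      field_simp at h2
      linear_combination h2
    have hnumZ : q.num^2 = d * (q.den:ℤ)^2 := by exact_mod_cast hnum
    have hdenne : (q.den : ℤ) ≠ 0 := by exact_mod_cast q.den_nz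
    rcases hd' with h | h | h | ⟨p, hp, hp2, hdd⟩
    · subst h; nlinarith [sq_nonneg q.num, sq_nonneg (q.den:ℤ), hnumZ,
        pow_pos (show (0:ℤ) < q.den by exact_mod_cast q.pos) 2]
    · subst h
      exact hdenne ((aux_sq 2 Nat.prime_two q.num q.den (by exact_mod_cast hnumZ)).2)
    · subst h; nlinarith [sq_nonneg q.num, pow_pos (show (0:ℤ) < q.den by exact_mod_cast q.pos) 2]
    · rcases hdd with ⟨h, -⟩ | ⟨h, -⟩
      · subst h
        exact hdenne ((aux_sq p hp q.num q.den (by exact_mod_cast hnumZ)).2)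
      · subst h
        have hppos : (0:ℤ) < p := by exact_mod_cast hp.pos
        nlinarith [sq_nonneg q.num, pow_pos (show (0:ℤ) < q.den by exact_mod_cast q.pos) 2]
  -- the norm formula
  have hNF : ∀ x y : ℚ, Algebra.norm ℚ (algebraMap ℚ K x + algebraMap ℚ K y * α)
      = x^2 - d*y^2 := norm_formula K hdeg d hnsq α hα
  -- generic construction of the witness
  have finish : ∀ x y z w : ℤ, z^2 - d*w^2 ≠ 0 → x^2 - d*y^2 = l * (z^2 - d*w^2) →
      ∃ w0 : K, Algebra.norm ℚ w0 = (l:ℚ) := by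
    intro x y z w hzw heq
    set u : K := algebraMap ℚ K (x:ℚ) + algebraMap ℚ K (y:ℚ) * α with hu
    set v : K := algebraMap ℚ K (z:ℚ) + algebraMap ℚ K (w:ℚ) * α with hv
    have hNu : Algebra.norm ℚ u = ((x:ℚ))^2 - d*((y:ℚ))^2 := hNF _ _
    have hNv : Algebra.norm ℚ v = ((z:ℚ))^2 - d*((w:ℚ))^2 := hNF _ _
    have hNvne : Algebra.norm ℚ v ≠ 0 := by
      rw [hNv]
      have : ((z^2 - d*w^2 : ℤ) : ℚ) ≠ 0 := Int.cast_ne_zero.mpr hzw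
      push_cast at this
      convert this using 1
    have hvne : v ≠ 0 := Algebra.norm_ne_zero_iff.mp hNvne
    refine ⟨u / v, ?_⟩
    have hmul : Algebra.norm ℚ (u/v) * Algebra.norm ℚ v = Algebra.norm ℚ u := by
      rw [← map_mul, div_mul_cancel₀ _ hvne]
    have heqQ : ((x:ℚ))^2 - d*((y:ℚ))^2 = (l:ℚ) * (((z:ℚ))^2 - d*((w:ℚ))^2) := by
      exact_mod_cast congrArg (fun t : ℤ => (t:ℚ)) heq
    have : Algebra.norm ℚ (u/v) * Algebra.norm ℚ v = (l:ℚ) * Algebra.norm ℚ v := by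
      rw [hmul, hNu, hNv, heqQ]
    exact mul_right_cancel₀ hNvne this
  -- the quotient ring tools
  obtain ⟨hchar, hsurj⟩ := quot_char_surj K l hl I hI
  have tool1 : ∀ t : 𝓞 K, ∃ c : ℤ, ((c : 𝓞 K) - t) ∈ I := by
    intro t
    obtain ⟨c, hc⟩ := hsurj (Ideal.Quotient.mk I t)
    refine ⟨c, ?_⟩
    rw [← Ideal.Quotient.eq_zero_iff_mem, map_sub, map_intCast, hc, sub_self]
  have tool2 : ∀ n : ℤ, ((n : 𝓞 K) ∈ I ↔ (l:ℤ) ∣ n) := by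
    intro n
    rw [← Ideal.Quotient.eq_zero_iff_mem, map_intCast]
    exact CharP.intCast_eq_zero_iff _ l n
  -- α is integral
  have hαint : α ∈ integralClosure ℤ K := by
    refine ⟨Polynomial.X^2 - Polynomial.C d, Polynomial.monic_X_pow_sub_C d two_ne_zero, ?_⟩
    rw [Polynomial.eval₂_sub, Polynomial.eval₂_pow, Polynomial.eval₂_X, Polynomial.eval₂_C, hα]
    simp
  set a0 : 𝓞 K := ⟨α, hαint⟩ with ha0
  have ha0sq : a0 * a0 = ((d : ℤ) : 𝓞 K) := by
    have hKid2 : α * α = ((d : ℤ) : K) := by rw [← pow_two]; exact hα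
    apply NumberField.RingOfIntegers.ext
    push_cast
    exact hKid2
  -- d is a square mod l
  have hsql : IsSquare ((d : ℤ) : ZMod l) := by
    obtain ⟨c, hc⟩ := tool1 a0
    have hmem : ((c^2 - d : ℤ) : 𝓞 K) ∈ I := by
      have hrw : ((c^2 - d : ℤ) : 𝓞 K)
          = ((c : 𝓞 K) - a0) * ((c : 𝓞 K) + a0) + (a0 * a0 - ((d:ℤ) : 𝓞 K)) := by
        push_cast
        ring
      rw [hrw, ha0sq, sub_self, add_zero]
      exact I.mul_mem_right _ hc
    have hdvd : (l:ℤ) ∣ c^2 - d := (tool2 _).mp hmem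
    have h0 : ((c^2 - d : ℤ) : ZMod l) = 0 := (ZMod.intCast_zmod_eq_zero_iff_dvd _ _).mpr hdvd
    push_cast at h0
    exact ⟨(c : ZMod l), by linear_combination -h0⟩
  -- main case analysis
  rcases hd' with hcase | hcase | hcase | ⟨p, hp, hp2, hd4⟩
  · -- d = -1
    subst hcase
    rcases eq_or_ne l 2 with hl2 | hl2
    · exact finish 1 1 1 0 (by norm_num) (by rw [hl2]; norm_num)
    · obtain ⟨x, y, z, w, h1, h2⟩ := rep_small l hl hl2 (-1) (Or.inl rfl) hsql
      exact finish x y z w h1 h2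
  · -- d = 2
    subst hcase
    rcases eq_or_ne l 2 with hl2 | hl2
    · exact finish 2 1 1 0 (by norm_num) (by rw [hl2]; norm_num)
    · obtain ⟨x, y, z, w, h1, h2⟩ := rep_small l hl hl2 2 (Or.inr (Or.inl rfl)) hsql
      exact finish x y z w h1 h2
  · -- d = -2
    subst hcase
    rcases eq_or_ne l 2 with hl2 | hl2
    · exact finish 0 1 1 0 (by norm_num) (by rw [hl2]; norm_num)
    · obtain ⟨x, y, z, w, h1, h2⟩ := rep_small l hl hl2 (-2) (Or.inr (Or.inr rfl)) hsql
      exact finish x y z w h1 h2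
  · -- d = ±p
    have hdpm : d = (p:ℤ) ∨ d = -(p:ℤ) := by
      rcases hd4 with ⟨h, -⟩ | ⟨h, -⟩
      · exact Or.inl h
      · exact Or.inr h
    rcases eq_or_ne l p with hlp | hlp
    · -- ramified case l = p
      subst hlp
      rcases hd4 with ⟨hdp, hmod⟩ | ⟨hdp, hmod⟩
      · -- d = p ≡ 1 mod 4 : use sum of two squares
        haveI : Fact (Nat.Prime l) := ⟨hl⟩
        obtain ⟨a, b, hab⟩ := Nat.Prime.sq_add_sq (p := l) (by omega)
        have hbne : (b:ℤ) ≠ 0 := by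
          intro h0
          have hb0 : b = 0 := by exact_mod_cast h0
          rw [hb0] at hab
          simp at hab
          exact prime_not_sq l hl (a:ℤ) (by exact_mod_cast hab)
        have habZ : (a:ℤ)^2 + (b:ℤ)^2 = (l:ℤ) := by exact_mod_cast hab
        refine finish (l:ℤ) (a:ℤ) (b:ℤ) 0 ?_ ?_
        · rw [hdp]; simpa using pow_ne_zero 2 hbne
        · rw [hdp]; nlinarith [habZ]
      · -- d = -p : α itself has norm p
        refine finish 0 1 1 0 (by rw [hdp]; norm_num) ?_
        rw [hdp]; push_cast; ring
    · -- split case l ≠ p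
      rcases eq_or_ne l 2 with hl2 | hl2
      · -- l = 2 : use (1+α)/2 to get d ≡ 1 mod 8
        subst hl2
        have h4 : (4:ℤ) ∣ 1 - d := by
          rcases hd4 with ⟨h, hm⟩ | ⟨h, hm⟩ <;> subst h <;> omega
        obtain ⟨m, hm4⟩ := h4
        have hm4K : (4:K)*(m:K) = 1 - (d:K) := by
          have h9 : ((1 - d : ℤ) : K) = ((4*m : ℤ) : K) := by rw [hm4]
          push_cast at h9
          linear_combination -h9
        have hKid : ((1+α)/2) * ((1+α)/2) - ((1+α)/2) + ((m:ℤ):K) = 0 := by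
          linear_combination hα/4 + hm4K/4
        have hβint : (1 + α)/2 ∈ integralClosure ℤ K := by
          refine ⟨Polynomial.X^2 - Polynomial.X + Polynomial.C m, by monicity!, ?_⟩
          rw [Polynomial.eval₂_add, Polynomial.eval₂_sub, Polynomial.eval₂_pow,
            Polynomial.eval₂_X, Polynomial.eval₂_C]
          rw [show (algebraMap ℤ K) m = ((m:ℤ):K) from by simp]
          rw [pow_two]
          linear_combination hKid
        set b0 : 𝓞 K := ⟨(1+α)/2, hβint⟩ with hb0
        have hb0sq : b0 * b0 - b0 + ((m:ℤ) : 𝓞 K) = 0 := by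
          apply NumberField.RingOfIntegers.ext
          push_cast
          exact hKid
        obtain ⟨c, hc⟩ := tool1 b0
        have hmem : ((c^2 - c + m : ℤ) : 𝓞 K) ∈ I := by
          have hrw : ((c^2 - c + m : ℤ) : 𝓞 K)
              = ((c : 𝓞 K) - b0) * ((c : 𝓞 K) + b0 - 1) + (b0 * b0 - b0 + ((m:ℤ) : 𝓞 K)) := by
            push_cast
            ring
          rw [hrw, hb0sq, add_zero]
          exact I.mul_mem_right _ hc
        have hdvd : (2:ℤ) ∣ c^2 - c + m := by exact_mod_cast (tool2 _).mp hmem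
        have h8 : (8:ℤ) ∣ 1 - d := by
          obtain ⟨k, hk⟩ := Int.even_mul_succ_self (c-1)
          obtain ⟨j, hj⟩ := hdvd
          have hcc : c^2 - c = k + k := by rw [← hk]; ring
          exact ⟨j - k, by linarith [hm4, hj, hcc]⟩
        have hs := recip_two p hp hp2 d hdpm h8
        obtain ⟨x, y, z, w, h1, h2⟩ := rep_p p 2 hp hl (fun h => hlp h) d hdpm hsql hs
        exact finish x y z w h1 h2
      · -- l odd : quadratic reciprocity
        have hs := recip_odd p l hp hl hp2 hl2 hlp d hd4 hsql
        obtain ⟨x, y, z, w, h1, h2⟩ := rep_p p l hp hl hlp d hdpm hsql hs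
        exact finish x y z w h1 h2
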